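/- For a function given by a finite orthonormal polynomial chaos expansion f(x) = Σ_𝐢 α_𝐢 Ψ_𝐢(x) over a product measure, the Sobol' index of the variable set S equals σ_S = (Σ_{nz(𝐢) = S} α_𝐢²) / (Σ_{𝐢 ≠ 0} α_𝐢²), i.e., the ANOVA component f_S equals Σ_{nz(𝐢)=S} α_𝐢 Ψ_𝐢 and its variance is Σ_{nz(𝐢)=S} α_𝐢². -/

import Mathlib

open MeasureTheory

/-- Conditional mean of `f` given the coordinates in `S`, for independent inputs
with marginal measures `ρ j`: integrate out the coordinates not in `S`. -/
noncomputable def condMean {d : ℕ} (ρ : Fin d → Measure ℝ) (f : (Fin d → ℝ) → ℝ)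
    (S : Finset (Fin d)) (x : Fin d → ℝ) : ℝ :=
  ∫ y, f (fun i => if i ∈ S then x i else y i) ∂(Measure.pi ρ)

/-- ANOVA (Sobol') component: `f_S(x) = E[f | x_S] - ∑_{T ⊊ S} f_T(x)`. -/
noncomputable def anova {d : ℕ} (ρ : Fin d → Measure ℝ) (f : (Fin d → ℝ) → ℝ)
    (S : Finset (Fin d)) (x : Fin d → ℝ) : ℝ :=
  condMean ρ f S x - ∑ T ∈ S.ssubsets.attach, anova ρ f T.1 x
termination_by S.card
decreasing_by exact Finset.card_lt_card (Finset.mem_ssubsets.mp T.2)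

/-- The uniform probability measure on `[0,1]`. -/
noncomputable def unif01 : Measure ℝ := (volume : Measure ℝ).restrict (Set.Icc 0 1)

open ENNReal

theorem integral_pi_prod' {d : ℕ} (ρ : Fin d → Measure ℝ) [∀ j, SigmaFinite (ρ j)]
    (g : Fin d → ℝ → ℝ) :
    ∫ x : Fin d → ℝ, ∏ j, g j (x j) ∂(Measure.pi ρ) = ∏ j, ∫ t, g j t ∂(ρ j) :=
  MeasureTheory.integral_fintype_prod_eq_prod (E := fun _ => ℝ) (μ := ρ) g

theorem integrable_pi_prod' {d : ℕ} (ρ : Fin d → Measure ℝ) [∀ j, SigmaFinite (ρ j)]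
    (g : Fin d → ℝ → ℝ) (hg : ∀ j, Integrable (g j) (ρ j)) :
    Integrable (fun x : Fin d → ℝ => ∏ j, g j (x j)) (Measure.pi ρ) :=
  MeasureTheory.Integrable.fintype_prod_dep (E := fun _ => ℝ) (f := g) (μ := ρ) hg

theorem mul_L2_int {X : Type*} [MeasurableSpace X] {μ : Measure X} {f g : X → ℝ}
    (hf : MemLp f 2 μ) (hg : MemLp g 2 μ) : Integrable (fun t => f t * g t) μ := by
  have h : (1:ℝ≥0∞)/1 = 1/2 + 1/2 := by
    rw [ENNReal.div_add_div_same, one_add_one_eq_two, ENNReal.div_self two_ne_zero ENNReal.ofNat_ne_top]; simp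
  have := hf.smul (φ := g) hg (r := 1)
  rw [memLp_one_iff_integrable] at this
  simpa [Pi.mul_def, smul_eq_mul, mul_comm] using this

section Aux

variable {d : ℕ} (ρ : Fin d → Measure ℝ) [∀ j, IsProbabilityMeasure (ρ j)]
    (ψ : Fin d → ℕ → ℝ → ℝ)

/-- mean of a single basis polynomial -/
theorem psi_mean (horth : ∀ j k l, ∫ t, ψ j k t * ψ j l t ∂(ρ j) = if k = l then 1 else 0)
    (hzero : ∀ j t, ψ j 0 t = 1) (j : Fin d) (k : ℕ) : ∫ t, ψ j k t ∂(ρ j) = if k = 0 then 1 else 0 := by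
  have h := horth j k 0
  simpa [hzero, mul_one] using h

/-- orthonormality of the tensor basis -/
theorem Psi_orth (horth : ∀ j k l, ∫ t, ψ j k t * ψ j l t ∂(ρ j) = if k = l then 1 else 0)
    (m n : Fin d → ℕ) :
    ∫ x : Fin d → ℝ, (∏ j, ψ j (m j) (x j)) * (∏ j, ψ j (n j) (x j)) ∂(Measure.pi ρ)
      = if m = n then 1 else 0 := by
  have h1 : ∀ x : Fin d → ℝ, (∏ j, ψ j (m j) (x j)) * (∏ j, ψ j (n j) (x j))
      = ∏ j, (ψ j (m j) (x j) * ψ j (n j) (x j)) := fun x => by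
    rw [Finset.prod_mul_distrib]
  simp_rw [h1]
  rw [integral_pi_prod' ρ (fun j t => ψ j (m j) t * ψ j (n j) t)]
  simp_rw [horth]
  by_cases h : m = n
  · subst h; simp
  · rw [if_neg h]
    obtain ⟨j, hj⟩ : ∃ j, m j ≠ n j := by
      by_contra hc; push_neg at hc; exact h (funext hc)
    exact Finset.prod_eq_zero (Finset.mem_univ j) (by rw [if_neg hj])

/-- each tensor basis function is integrable -/
theorem Psi_int (hint : ∀ j k, Integrable (ψ j k) (ρ j)) (m : Fin d → ℕ) :
    Integrable (fun x : Fin d → ℝ => ∏ j, ψ j (m j) (x j)) (Measure.pi ρ) :=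
  integrable_pi_prod' ρ _ (fun j => hint j (m j))

/-- product of two tensor basis functions is integrable -/
theorem Psi_mul_int (hL2 : ∀ j k, MemLp (ψ j k) 2 (ρ j)) (m n : Fin d → ℕ) :
    Integrable (fun x : Fin d → ℝ =>
      (∏ j, ψ j (m j) (x j)) * (∏ j, ψ j (n j) (x j))) (Measure.pi ρ) := by
  have h1 : ∀ x : Fin d → ℝ, (∏ j, ψ j (m j) (x j)) * (∏ j, ψ j (n j) (x j))
      = ∏ j, (ψ j (m j) (x j) * ψ j (n j) (x j)) := fun x => by
    rw [Finset.prod_mul_distrib]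
  simp_rw [h1]
  exact integrable_pi_prod' ρ _ (fun j => mul_L2_int (hL2 j (m j)) (hL2 j (n j)))

/-- variance of an orthonormal expansion -/
theorem var_sum (horth : ∀ j k l, ∫ t, ψ j k t * ψ j l t ∂(ρ j) = if k = l then 1 else 0)
    (hL2 : ∀ j k, MemLp (ψ j k) 2 (ρ j)) (α : (Fin d → ℕ) → ℝ) (F : Finset (Fin d → ℕ)) :
    ∫ x, (∑ m ∈ F, α m * ∏ j, ψ j (m j) (x j)) ^ 2 ∂(Measure.pi ρ)
      = ∑ m ∈ F, (α m) ^ 2 := by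
  have hexp : ∀ x : Fin d → ℝ, (∑ m ∈ F, α m * ∏ j, ψ j (m j) (x j)) ^ 2
      = ∑ m ∈ F, ∑ n ∈ F, (α m * α n) *
          ((∏ j, ψ j (m j) (x j)) * (∏ j, ψ j (n j) (x j))) := by
    intro x
    rw [sq, Finset.sum_mul_sum]
    refine Finset.sum_congr rfl fun m _ => Finset.sum_congr rfl fun n _ => by ring
  simp_rw [hexp]
  rw [integral_finset_sum]
  · have : ∀ m ∈ F, (∫ x, ∑ n ∈ F, (α m * α n) *
        ((∏ j, ψ j (m j) (x j)) * (∏ j, ψ j (n j) (x j))) ∂(Measure.pi ρ)) = (α m)^2 := by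
      intro m hm
      rw [integral_finset_sum]
      · have : ∀ n ∈ F, (∫ x, (α m * α n) *
            ((∏ j, ψ j (m j) (x j)) * (∏ j, ψ j (n j) (x j))) ∂(Measure.pi ρ))
            = if m = n then (α m)^2 else 0 := by
          intro n _
          rw [integral_const_mul, Psi_orth ρ ψ horth m n]
          by_cases h : m = n
          · subst h; simp [sq]
          · simp [h]
        rw [Finset.sum_congr rfl this, Finset.sum_ite_eq, if_pos hm]
      · exact fun n _ => ((Psi_mul_int ρ ψ hL2 m n).const_mul _)
    rw [Finset.sum_congr rfl this]
  · intro m _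
    apply integrable_finset_sum
    exact fun n _ => ((Psi_mul_int ρ ψ hL2 m n).const_mul _)

/-- conditional mean of a single tensor basis function -/
theorem condMean_term (hint : ∀ j k, Integrable (ψ j k) (ρ j))
    (horth : ∀ j k l, ∫ t, ψ j k t * ψ j l t ∂(ρ j) = if k = l then 1 else 0)
    (hzero : ∀ j t, ψ j 0 t = 1) (m : Fin d → ℕ) (S : Finset (Fin d)) (x : Fin d → ℝ) :
    ∫ y, (∏ j, ψ j (m j) (if j ∈ S then x j else y j)) ∂(Measure.pi ρ)
      = if (Finset.univ.filter fun j => m j ≠ 0) ⊆ S then ∏ j, ψ j (m j) (x j) else 0 := by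
  have h1 : ∀ y : Fin d → ℝ, (∏ j, ψ j (m j) (if j ∈ S then x j else y j))
      = ∏ j, (if j ∈ S then ψ j (m j) (x j) else ψ j (m j) (y j)) := by
    intro y
    refine Finset.prod_congr rfl fun j _ => ?_
    by_cases hj : j ∈ S <;> simp [hj]
  have key := integral_pi_prod' ρ (fun j t => if j ∈ S then ψ j (m j) (x j) else ψ j (m j) t)
  rw [show (∫ y, (∏ j, ψ j (m j) (if j ∈ S then x j else y j)) ∂(Measure.pi ρ))
      = ∏ j, ∫ t, (if j ∈ S then ψ j (m j) (x j) else ψ j (m j) t) ∂(ρ j) from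
    Eq.trans (by congr 1; funext y; exact h1 y) key]
  have h2 : ∀ j : Fin d, (∫ t, (if j ∈ S then ψ j (m j) (x j) else ψ j (m j) t) ∂(ρ j))
      = if j ∈ S then ψ j (m j) (x j) else (if m j = 0 then 1 else 0) := by
    intro j
    by_cases hj : j ∈ S
    · simp [hj]
    · simp only [hj, if_false]
      exact psi_mean ρ ψ horth hzero j (m j)
  rw [Finset.prod_congr rfl fun j _ => h2 j]
  by_cases hsub : (Finset.univ.filter fun j => m j ≠ 0) ⊆ S
  · rw [if_pos hsub]
    refine Finset.prod_congr rfl fun j _ => ?_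
    by_cases hj : j ∈ S
    · rw [if_pos hj]
    · rw [if_neg hj]
      have hmj : m j = 0 := by
        by_contra hne
        exact hj (hsub (Finset.mem_filter.mpr ⟨Finset.mem_univ j, hne⟩))
      rw [if_pos hmj, hmj, hzero]
  · rw [if_neg hsub]
    obtain ⟨j, hjm, hjS⟩ := Finset.not_subset.mp hsub
    have hmj : m j ≠ 0 := (Finset.mem_filter.mp hjm).2
    exact Finset.prod_eq_zero (Finset.mem_univ j) (by rw [if_neg hjS, if_neg hmj])

/-- conditional mean of the PCE -/
theorem condMean_PCE (hint : ∀ j k, Integrable (ψ j k) (ρ j))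
    (horth : ∀ j k l, ∫ t, ψ j k t * ψ j l t ∂(ρ j) = if k = l then 1 else 0)
    (hzero : ∀ j t, ψ j 0 t = 1) (I : Finset (Fin d → ℕ)) (α : (Fin d → ℕ) → ℝ)
    (f : (Fin d → ℝ) → ℝ)
    (hf : ∀ x, f x = ∑ m ∈ I, α m * ∏ j, ψ j (m j) (x j))
    (S : Finset (Fin d)) (x : Fin d → ℝ) :
    condMean ρ f S x = ∑ m ∈ I.filter (fun m => (Finset.univ.filter fun j => m j ≠ 0) ⊆ S),
        α m * ∏ j, ψ j (m j) (x j) := by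
  unfold condMean
  simp_rw [hf]
  rw [integral_finset_sum]
  · have h3 : ∀ m ∈ I, (∫ y, α m * ∏ j, ψ j (m j) (if j ∈ S then x j else y j) ∂(Measure.pi ρ))
        = if (Finset.univ.filter fun j => m j ≠ 0) ⊆ S then α m * ∏ j, ψ j (m j) (x j) else 0 := by
      intro m _
      rw [integral_const_mul, condMean_term ρ ψ hint horth hzero m S x, mul_ite, mul_zero]
    rw [Finset.sum_congr rfl h3, ← Finset.sum_filter]
  · intro m _
    have h4 : ∀ j : Fin d, Integrable
        (fun t => if j ∈ S then ψ j (m j) (x j) else ψ j (m j) t) (ρ j) := by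
      intro j
      by_cases hj : j ∈ S
      · simp only [hj, if_true]; exact integrable_const _
      · simp only [hj, if_false]; exact hint j (m j)
    have h5 : ∀ y : Fin d → ℝ, (∏ j, ψ j (m j) (if j ∈ S then x j else y j))
        = ∏ j, (fun t => if j ∈ S then ψ j (m j) (x j) else ψ j (m j) t) (y j) := by
      intro y
      refine Finset.prod_congr rfl fun j _ => ?_
      by_cases hj : j ∈ S <;> simp [hj]
    simp_rw [h5]
    exact (integrable_pi_prod' ρ _ h4).const_mul _

/-- the ANOVA component of the PCE -/
theorem anova_PCE (hint : ∀ j k, Integrable (ψ j k) (ρ j))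
    (horth : ∀ j k l, ∫ t, ψ j k t * ψ j l t ∂(ρ j) = if k = l then 1 else 0)
    (hzero : ∀ j t, ψ j 0 t = 1) (I : Finset (Fin d → ℕ)) (α : (Fin d → ℕ) → ℝ)
    (f : (Fin d → ℝ) → ℝ)
    (hf : ∀ x, f x = ∑ m ∈ I, α m * ∏ j, ψ j (m j) (x j))
    (S : Finset (Fin d)) :
    ∀ x, anova ρ f S x = ∑ m ∈ I.filter (fun m => (Finset.univ.filter fun j => m j ≠ 0) = S),
        α m * ∏ j, ψ j (m j) (x j) := by
  induction S using Finset.strongInduction with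
  | _ S IH =>
    intro x
    rw [anova, Finset.sum_attach S.ssubsets (fun T => anova ρ f T x),
      condMean_PCE ρ ψ hint horth hzero I α f hf S x]
    have hIH : ∑ T ∈ S.ssubsets, anova ρ f T x
        = ∑ m ∈ I.filter (fun m => (Finset.univ.filter fun j => m j ≠ 0) ⊂ S),
            α m * ∏ j, ψ j (m j) (x j) := by
      rw [Finset.sum_congr rfl fun T hT => IH T (Finset.mem_ssubsets.mp hT) x]
      rw [← Finset.sum_fiberwise_of_maps_to (g := fun m => Finset.univ.filter fun j => m j ≠ 0)
        (s := I.filter (fun m => (Finset.univ.filter fun j => m j ≠ 0) ⊂ S))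
        (t := S.ssubsets) (fun m hm => Finset.mem_ssubsets.mpr (Finset.mem_filter.mp hm).2)
        (fun m => α m * ∏ j, ψ j (m j) (x j))]
      refine Finset.sum_congr rfl fun T hT => ?_
      have hTS := Finset.mem_ssubsets.mp hT
      congr 1
      ext n
      simp only [Finset.mem_filter]
      exact ⟨fun h => ⟨⟨h.1, h.2 ▸ hTS⟩, h.2⟩, fun h => ⟨h.1.1, h.2⟩⟩
    rw [hIH, Finset.sum_filter, Finset.sum_filter, Finset.sum_filter, ← Finset.sum_sub_distrib]
    refine Finset.sum_congr rfl fun m _ => ?_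
    by_cases h : (Finset.univ.filter fun j => m j ≠ 0) = S
    · rw [if_pos h, if_pos (h ▸ Finset.Subset.refl _), if_neg (h ▸ ssubset_irrefl _), sub_zero]
    · rw [if_neg h]
      by_cases h2 : (Finset.univ.filter fun j => m j ≠ 0) ⊆ S
      · rw [if_pos h2, if_pos (HasSubset.Subset.ssubset_of_ne h2 h), sub_self]
      · rw [if_neg h2, if_neg fun hc => h2 hc.subset, sub_zero]

/-- mean of the PCE -/
theorem mean_PCE (hint : ∀ j k, Integrable (ψ j k) (ρ j))
    (horth : ∀ j k l, ∫ t, ψ j k t * ψ j l t ∂(ρ j) = if k = l then 1 else 0)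
    (hzero : ∀ j t, ψ j 0 t = 1) (I : Finset (Fin d → ℕ)) (α : (Fin d → ℕ) → ℝ)
    (f : (Fin d → ℝ) → ℝ)
    (hf : ∀ x, f x = ∑ m ∈ I, α m * ∏ j, ψ j (m j) (x j)) :
    ∫ y, f y ∂(Measure.pi ρ) = ∑ m ∈ I.filter (fun m => m = fun _ => 0), α m := by
  simp_rw [hf]
  rw [integral_finset_sum _ (fun m _ => (Psi_int ρ ψ hint m).const_mul _)]
  have h : ∀ m ∈ I, (∫ x, α m * ∏ j, ψ j (m j) (x j) ∂(Measure.pi ρ))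
      = if m = (fun _ => 0) then α m else 0 := by
    intro m _
    rw [integral_const_mul, integral_pi_prod' ρ (fun j t => ψ j (m j) t)]
    simp_rw [psi_mean ρ ψ horth hzero]
    by_cases h : m = fun _ => 0
    · rw [if_pos h, Finset.prod_congr rfl (fun j _ => by rw [if_pos (congrFun h j)]),
        Finset.prod_const_one, mul_one]
    · rw [if_neg h]
      obtain ⟨j, hj⟩ : ∃ j, m j ≠ 0 := by
        by_contra hc; push_neg at hc; exact h (funext hc)
      rw [Finset.prod_eq_zero (Finset.mem_univ j) (by rw [if_neg hj]), mul_zero]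
  rw [Finset.sum_congr rfl h, ← Finset.sum_filter]

end Aux


/-- for a finite orthonormal polynomial chaos expansion over a product
measure, the ANOVA component for a variable set S consists of exactly the terms with
nz(m) = S, its variance is the corresponding sum of squared coefficients, and the
Sobol' index is the ratio of sums of squared coefficients. -/
theorem sobol_index_PCE {d : ℕ} (ρ : Fin d → Measure ℝ) [∀ j, IsProbabilityMeasure (ρ j)]
    (ψ : Fin d → ℕ → ℝ → ℝ)
    (horth : ∀ j k l, ∫ t, ψ j k t * ψ j l t ∂(ρ j) = if k = l then 1 else 0)
    (hint : ∀ j k, Integrable (ψ j k) (ρ j))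
    (hL2 : ∀ j k, MemLp (ψ j k) 2 (ρ j))
    (hzero : ∀ j t, ψ j 0 t = 1)
    (I : Finset (Fin d → ℕ)) (α : (Fin d → ℕ) → ℝ)
    (f : (Fin d → ℝ) → ℝ)
    (hf : ∀ x, f x = ∑ m ∈ I, α m * ∏ j, ψ j (m j) (x j))
    (S : Finset (Fin d)) (hS : S.Nonempty) :
    (∀ x, anova ρ f S x
        = ∑ m ∈ I.filter (fun m => (Finset.univ.filter fun j => m j ≠ 0) = S),
            α m * ∏ j, ψ j (m j) (x j)) ∧
    (∫ x, (anova ρ f S x) ^ 2 ∂(Measure.pi ρ)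
        = ∑ m ∈ I.filter (fun m => (Finset.univ.filter fun j => m j ≠ 0) = S),
            (α m) ^ 2) ∧
    ((∫ x, (anova ρ f S x) ^ 2 ∂(Measure.pi ρ))
          / (∫ x, (f x - ∫ y, f y ∂(Measure.pi ρ)) ^ 2 ∂(Measure.pi ρ))
        = (∑ m ∈ I.filter (fun m => (Finset.univ.filter fun j => m j ≠ 0) = S), (α m) ^ 2)
          / (∑ m ∈ I.filter (fun m => m ≠ fun _ => 0), (α m) ^ 2)) := by
  have part1 := anova_PCE ρ ψ hint horth hzero I α f hf S
  have part2 : ∫ x, (anova ρ f S x) ^ 2 ∂(Measure.pi ρ)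
      = ∑ m ∈ I.filter (fun m => (Finset.univ.filter fun j => m j ≠ 0) = S), (α m) ^ 2 := by
    simp_rw [part1]
    exact var_sum ρ ψ horth hL2 α _
  have hden : ∫ x, (f x - ∫ y, f y ∂(Measure.pi ρ)) ^ 2 ∂(Measure.pi ρ)
      = ∑ m ∈ I.filter (fun m => m ≠ fun _ => 0), (α m) ^ 2 := by
    have hmean := mean_PCE ρ ψ hint horth hzero I α f hf
    have hfx : ∀ x, f x - ∫ y, f y ∂(Measure.pi ρ)
        = ∑ m ∈ I.filter (fun m => m ≠ fun _ => 0), α m * ∏ j, ψ j (m j) (x j) := by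
      intro x
      rw [hf x, hmean, ← Finset.sum_filter_add_sum_filter_not I (fun m => m = fun _ => 0)
        (fun m => α m * ∏ j, ψ j (m j) (x j))]
      have h1 : ∑ m ∈ I.filter (fun m => m = fun _ => 0), α m * ∏ j, ψ j (m j) (x j)
          = ∑ m ∈ I.filter (fun m => m = fun _ => 0), α m := by
        refine Finset.sum_congr rfl fun m hm => ?_
        have hm0 := (Finset.mem_filter.mp hm).2
        rw [Finset.prod_congr rfl (fun j _ => by rw [congrFun hm0 j, hzero]),
          Finset.prod_const_one, mul_one]
      rw [h1]
      exact add_sub_cancel_left _ _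
    simp_rw [hfx]
    exact var_sum ρ ψ horth hL2 α _
  exact ⟨part1, part2, by rw [part2, hden]⟩
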